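/- Let ℓ ≥ 3 be an integer and let H_{2,ℓ} be the graph described in the context. Then every total dominating set of H_{2,ℓ} that contains none of the vertices u, v, w has at least 2(ℓ−1) vertices. -/
import Mathlib


/-- The three special vertices `u`, `v`, `w`. -/
inductive UVW : Type
  | u | v | w
deriving DecidableEq

/-- Vertices of `H_{2,ℓ}`: triangle vertices `t_{i,j}` as `Sum.inl (i,j)`
(0-indexed), plus `u`, `v`, `w`. -/
abbrev H2lV (l : ℕ) := (Fin (l - 1) × Fin 3) ⊕ UVW

/-- Edge relation of `H_{2,ℓ}`: triangles on each `t_{i,·}`; edges `uv`, `uw`;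
`v` adjacent to every `t_{i,j}`; `u` adjacent to `t_{1,1}` (0-indexed `(0,0)`)
and to all `t_{i,j}` with `i ≥ 2` (0-indexed `1 ≤ i.val`); `w` adjacent to
`t_{1,1}` and to `t_{i,1}`, `t_{i,2}` (0-indexed `j ∈ {0,1}`) for `i ≥ 2`;
`v` and `w` nonadjacent. -/
def H2lRel (l : ℕ) : H2lV l → H2lV l → Prop
  | .inl p, .inl q => p.1 = q.1
  | .inr .u, .inl p => (p.1.val = 0 ∧ p.2.val = 0) ∨ 1 ≤ p.1.val
  | .inr .v, .inl _ => True
  | .inr .w, .inl p =>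
      (p.1.val = 0 ∧ p.2.val = 0) ∨ (1 ≤ p.1.val ∧ (p.2.val = 0 ∨ p.2.val = 1))
  | .inr .u, .inr .v => True
  | .inr .u, .inr .w => True
  | _, _ => False

/-- The graph `H_{2,ℓ}`. -/
def H2l (l : ℕ) : SimpleGraph (H2lV l) := SimpleGraph.fromRel (H2lRel l)

/-- `D` is a total dominating set of `G`. -/
def IsTotalDomSet {V : Type*} (G : SimpleGraph V) (D : Finset V) : Prop :=
  ∀ v : V, ∃ d ∈ D, G.Adj v d

/-- Every total dominating set of `H_{2,ℓ}` containing none of `u`, `v`, `w`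
has at least `2(ℓ-1)` vertices. -/
theorem stmt11 (l : ℕ) (hl : 3 ≤ l)
    (D : Finset (H2lV l)) (hD : IsTotalDomSet (H2l l) D)
    (hu : (Sum.inr UVW.u : H2lV l) ∉ D)
    (hv : (Sum.inr UVW.v : H2lV l) ∉ D)
    (hw : (Sum.inr UVW.w : H2lV l) ∉ D) :
    2 * (l - 1) ≤ D.card := by
  classical
  have hl1 : 0 < l - 1 := by omega
  set g : H2lV l → Fin (l - 1) := Sum.elim Prod.fst (fun _ => ⟨0, hl1⟩) with hg
  -- every neighbor in D of a triangle vertex is in the same triangle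
  have hnbr : ∀ (i : Fin (l - 1)) (j : Fin 3),
      ∃ j' : Fin 3, j' ≠ j ∧ Sum.inl (i, j') ∈ D := by
    intro i j
    obtain ⟨d, hdD, hadj⟩ := hD (Sum.inl (i, j))
    match d with
    | .inr .u => exact absurd hdD hu
    | .inr .v => exact absurd hdD hv
    | .inr .w => exact absurd hdD hw
    | .inl (i', j') =>
      rw [H2l, SimpleGraph.fromRel_adj] at hadj
      obtain ⟨hne, hrel⟩ := hadj
      have hi : i' = i := by
        rcases hrel with h | h
        · exact (h : i = i').symm
        · exact (h : i' = i)
      subst hi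
      refine ⟨j', fun hj => hne ?_, hdD⟩
      rw [hj]
  have key : ∀ i : Fin (l - 1), 2 ≤ (D.filter (fun x => g x = i)).card := by
    intro i
    obtain ⟨j1, _, h1⟩ := hnbr i 0
    obtain ⟨j2, hj21, h2⟩ := hnbr i j1
    have : (1 : ℕ) < (D.filter (fun x => g x = i)).card := by
      rw [Finset.one_lt_card_iff]
      refine ⟨Sum.inl (i, j1), Sum.inl (i, j2), ?_, ?_, ?_⟩
      · simp [h1, hg]
      · simp [h2, hg]
      · simp only [ne_eq, Sum.inl.injEq, Prod.mk.injEq]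
        rintro ⟨-, h⟩
        exact hj21 h.symm
    omega
  have hcard : D.card = ∑ i : Fin (l - 1), (D.filter (fun x => g x = i)).card :=
    Finset.card_eq_sum_card_fiberwise (fun x _ => Finset.mem_univ (g x))
  rw [hcard]
  calc 2 * (l - 1) = ∑ _i : Fin (l - 1), 2 := by
        simp [Finset.sum_const, mul_comm]
    _ ≤ _ := Finset.sum_le_sum (fun i _ => key i)
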